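/- Let T be a totally ordered set, 𝔽 a field, and I ⊆ T an interval. Then rad(C(I)), the image of the canonical map overline(C(I)) → C(I), is isomorphic to C(rad(I)), where rad(I) = I ∩ overline(I) (and C(∅) = 0). -/

import Mathlib

open CategoryTheory CategoryTheory.Limits

set_option maxHeartbeats 1000000
set_option synthInstance.maxHeartbeats 200000

/-- A persistence module over a totally ordered set `T`: a functor from `T` (viewed as a
category via its order) to the category of `F`-vector spaces. -/
abbrev PersistenceModule (F : Type) [Field F] (T : Type) [LinearOrder T] :=
  T ⥤ ModuleCat.{0} F

variable (F : Type) [Field F] (T : Type) [LinearOrder T]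

/-- The inclusion functor of the strict up-set of `t` into `T`. -/
def upFunctor (t : T) : {s : T // t < s} ⥤ T :=
  Monotone.functor (f := (Subtype.val : {s : T // t < s} → T)) (fun _ _ h => h)

/-- The inclusion functor of the strict down-set of `t` into `T`. -/
def downFunctor (t : T) : {s : T // s < t} ⥤ T :=
  Monotone.functor (f := (Subtype.val : {s : T // s < t} → T)) (fun _ _ h => h)

/-- `underline M`, with `(underline M)_t = lim_{s > t} M_s` (the limit over the empty
category being `0`). -/
noncomputable def underlinePM (M : PersistenceModule F T) : PersistenceModule F T where
  obj t := limit (upFunctor T t ⋙ M)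
  map {s t} f := limit.lift (upFunctor T t ⋙ M)
    { pt := limit (upFunctor T s ⋙ M)
      π :=
        { app := fun u => limit.π (upFunctor T s ⋙ M) ⟨u.1, lt_of_le_of_lt (leOfHom f) u.2⟩
          naturality := fun u v g => by
            exact (Category.id_comp _).trans
              (limit.w (upFunctor T s ⋙ M) (homOfLE (leOfHom g))).symm } }
  map_id t := by
    apply limit.hom_ext
    intro u
    simp
  map_comp {s t u} f g := by
    apply limit.hom_ext
    intro v
    simp
    refine Eq.symm ?_
    exact limit.lift_π _ _

/-- `overline M`, with `(overline M)_t = colim_{s < t} M_s` (the colimit over the empty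
category being `0`). -/
noncomputable def overlinePM (M : PersistenceModule F T) : PersistenceModule F T where
  obj t := colimit (downFunctor T t ⋙ M)
  map {s t} f := colimit.desc (downFunctor T s ⋙ M)
    { pt := colimit (downFunctor T t ⋙ M)
      ι :=
        { app := fun u => colimit.ι (downFunctor T t ⋙ M) ⟨u.1, lt_of_lt_of_le u.2 (leOfHom f)⟩
          naturality := fun u v g => by
            refine Eq.trans ?_ (Category.comp_id _).symm
            have h : (⟨u.1, lt_of_lt_of_le u.2 (leOfHom f)⟩ : {x : T // x < t}) ⟶
                ⟨v.1, lt_of_lt_of_le v.2 (leOfHom f)⟩ := homOfLE (leOfHom g)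
            exact colimit.w (downFunctor T t ⋙ M) h } }
  map_id t := by
    apply colimit.hom_ext
    intro u
    simp
  map_comp {s t u} f g := by
    apply colimit.hom_ext
    intro v
    simp
    refine Eq.symm ?_
    exact colimit.ι_desc _ _

/-- The canonical morphism `M ⟶ underline M` given by the universal property of the limits. -/
noncomputable def toUnderline (M : PersistenceModule F T) : M ⟶ underlinePM F T M where
  app t := limit.lift (upFunctor T t ⋙ M)
    { pt := M.obj t
      π :=
        { app := fun u => M.map (homOfLE u.2.le)
          naturality := fun u v g => by
            dsimp
            rw [Category.id_comp, ← M.map_comp]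
            rfl } }
  naturality s t f := by
    apply limit.hom_ext
    intro u
    simp only [underlinePM, Category.assoc, limit.lift_π, ← M.map_comp]
    refine Eq.symm ?_
    exact limit.lift_π _ _

/-- The canonical morphism `overline M ⟶ M` given by the universal property of the colimits. -/
noncomputable def fromOverline (M : PersistenceModule F T) : overlinePM F T M ⟶ M where
  app t := colimit.desc (downFunctor T t ⋙ M)
    { pt := M.obj t
      ι :=
        { app := fun u => M.map (homOfLE u.2.le)
          naturality := fun u v g => by
            dsimp
            rw [Category.comp_id, ← M.map_comp]
            rfl } }
  naturality s t f := by
    apply colimit.hom_ext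
    intro u
    simp only [overlinePM, colimit.ι_desc_assoc, colimit.ι_desc, ← M.map_comp]
    exact colimit.ι_desc _ _

/-- `M` is upper semi-continuous if the canonical map `M_t → lim_{s > t} M_s` is an
isomorphism for all `t`. -/
noncomputable def IsUSC (M : PersistenceModule F T) : Prop :=
  ∀ t : T, IsIso ((toUnderline F T M).app t)

/-- `M` is lower semi-continuous if the canonical map `colim_{s < t} M_s → M_t` is an
isomorphism for all `t`. -/
noncomputable def IsLSC (M : PersistenceModule F T) : Prop :=
  ∀ t : T, IsIso ((fromOverline F T M).app t)

/-- `M` is ephemeral if all structure maps `M_{s,t}` with `s < t` vanish. -/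
def Ephemeral (M : PersistenceModule F T) : Prop :=
  ∀ s t : T, ∀ h : s < t, M.map (homOfLE h.le) = 0

/-- `M` is q-tame if all structure maps `M_{s,t}` with `s < t` have finite rank. -/
def QTame (M : PersistenceModule F T) : Prop :=
  ∀ s t : T, ∀ h : s < t, Module.Finite F (LinearMap.range (M.map (homOfLE h.le)).hom)

/-- A morphism of persistence modules is a weak isomorphism if its kernel and cokernel
are ephemeral. -/
noncomputable def IsWeakIso {M N : PersistenceModule F T} (φ : M ⟶ N) : Prop :=
  Ephemeral F T (kernel φ) ∧ Ephemeral F T (cokernel φ)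

open Classical

/-- The interval module `C(I)`: the field `F` at points of `I` with identity structure
maps inside `I`, and `0` elsewhere (in particular `C(∅) = 0`). -/
noncomputable def intervalModule (I : Set T) : PersistenceModule F T where
  obj t := ModuleCat.of F (↥(if t ∈ I then (⊤ : Submodule F F) else (⊥ : Submodule F F)))
  map {s t} f :=
    if h : Set.Icc s t ⊆ I then
      ModuleCat.ofHom (Submodule.inclusion (by
        rw [if_pos (h (Set.right_mem_Icc.mpr (leOfHom f)))]
        exact le_top) : ↥(if s ∈ I then (⊤ : Submodule F F) else (⊥ : Submodule F F)) →ₗ[F]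
          ↥(if t ∈ I then (⊤ : Submodule F F) else (⊥ : Submodule F F)))
    else 0
  map_id t := by
    by_cases ht : t ∈ I
    · rw [dif_pos (by simpa using ht)]
      rfl
    · have h : ¬ Set.Icc t t ⊆ I := by simpa using ht
      rw [dif_neg h]
      have hs : Subsingleton (↥(if t ∈ I then (⊤ : Submodule F F) else (⊥ : Submodule F F))) := by
        rw [if_neg ht]
        infer_instance
      apply ModuleCat.hom_ext
      apply LinearMap.ext
      intro x
      exact @Subsingleton.elim _ hs _ _
  map_comp {s t u} f g := by
    by_cases h : Set.Icc s u ⊆ I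
    · have h1 : Set.Icc s t ⊆ I :=
        fun x hx => h ⟨hx.1, le_trans hx.2 (leOfHom g)⟩
      have h2 : Set.Icc t u ⊆ I :=
        fun x hx => h ⟨le_trans (leOfHom f) hx.1, hx.2⟩
      rw [dif_pos h, dif_pos h1, dif_pos h2]
      rfl
    · rw [dif_neg h]
      by_cases h1 : Set.Icc s t ⊆ I
      · have h2 : ¬ Set.Icc t u ⊆ I := fun h2 => h (by
          intro x hx
          rcases le_total x t with hxt | htx
          · exact h1 ⟨hx.1, hxt⟩
          · exact h2 ⟨htx, hx.2⟩)
        rw [dif_pos h1, dif_neg h2, Limits.comp_zero]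
      · rw [dif_neg h1, Limits.zero_comp]

/-- Functoriality of `overline` on morphisms. -/
noncomputable def overlineMap {M N : PersistenceModule F T} (φ : M ⟶ N) :
    overlinePM F T M ⟶ overlinePM F T N where
  app t := colimMap (Functor.whiskerLeft (downFunctor T t) φ)
  naturality s t f := by
    apply colimit.hom_ext
    intro u
    simp [overlinePM]
    exact ι_colimMap (Functor.whiskerLeft (downFunctor T t) φ) ⟨u.1, lt_of_lt_of_le u.2 (leOfHom f)⟩

/-- Functoriality of `underline` on morphisms. -/
noncomputable def underlineMap {M N : PersistenceModule F T} (φ : M ⟶ N) :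
    underlinePM F T M ⟶ underlinePM F T N where
  app t := limMap (Functor.whiskerLeft (upFunctor T t) φ)
  naturality s t f := by
    apply limit.hom_ext
    intro u
    simp [underlinePM]
    exact (limMap_π (Functor.whiskerLeft (upFunctor T s) φ) ⟨u.1, lt_of_le_of_lt (leOfHom f) u.2⟩).symm

/-- The radical of a persistence module: the image of the canonical morphism
`overline M ⟶ M`. -/
noncomputable def radPM (M : PersistenceModule F T) : PersistenceModule F T :=
  image (fromOverline F T M)

/-- The canonical morphism from the direct sum to the product of a collection of
persistence modules. -/
noncomputable def sumToProd {A : Type} (M : A → PersistenceModule F T) :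
    (∐ M) ⟶ (∏ᶜ M) :=
  Sigma.desc fun a => Pi.lift fun b =>
    if h : a = b then eqToHom (congrArg M h) else 0

/-- The pointwise dual persistence module `M*`, indexed by the opposite order. -/
noncomputable def dualPM (M : PersistenceModule F T) : PersistenceModule F Tᵒᵈ where
  obj t := ModuleCat.of F (Module.Dual F (M.obj (OrderDual.ofDual t)))
  map {s t} f :=
    ModuleCat.ofHom (M.map (homOfLE (leOfHom f : OrderDual.ofDual t ≤ OrderDual.ofDual s))).hom.dualMap
  map_id t := by
    rw [show (homOfLE _ : OrderDual.ofDual t ⟶ OrderDual.ofDual t) = 𝟙 _ from rfl,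
      M.map_id]
    rfl
  map_comp {s t u} f g := by
    rw [show (homOfLE _ : OrderDual.ofDual u ⟶ OrderDual.ofDual s) =
        (homOfLE (leOfHom g : OrderDual.ofDual u ≤ OrderDual.ofDual t)) ≫
        (homOfLE (leOfHom f : OrderDual.ofDual t ≤ OrderDual.ofDual s)) from rfl,
      M.map_comp]
    rfl

/-- `I` is an interval in a totally ordered set: if `s ≤ t ≤ u` with `s, u ∈ I`, then `t ∈ I`. -/
def IsInterval {T : Type*} [LinearOrder T] (I : Set T) : Prop :=
  ∀ ⦃s t u : T⦄, s ≤ t → t ≤ u → s ∈ I → u ∈ I → t ∈ I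

/-- `underline I`: the set of `t` such that `I ∩ {s | t < s}` is nonempty and coinitial
in `{s | t < s}`. -/
def underlineSet {T : Type*} [LinearOrder T] (I : Set T) : Set T :=
  {t | (I ∩ Set.Ioi t).Nonempty ∧ ∀ s ∈ Set.Ioi t, ∃ u ∈ I ∩ Set.Ioi t, u ≤ s}

/-- `overline I`: the set of `t` such that `I ∩ {s | s < t}` is nonempty and cofinal
in `{s | s < t}`. -/
def overlineSet {T : Type*} [LinearOrder T] (I : Set T) : Set T :=
  {t | (I ∩ Set.Iio t).Nonempty ∧ ∀ s ∈ Set.Iio t, ∃ u ∈ I ∩ Set.Iio t, s ≤ u}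

/-- `rad I = I ∩ overline I`. -/
def radSet {T : Type*} [LinearOrder T] (I : Set T) : Set T :=
  I ∩ overlineSet I

-- Set-level lemmas
lemma mem_radSet_of_icc {T : Type*} [LinearOrder T] {I : Set T} {s t : T}
    (hst : s < t) (hs : s ∈ I) (h : Set.Icc s t ⊆ I) : t ∈ radSet I := by
  refine ⟨h (Set.right_mem_Icc.mpr hst.le), ⟨s, hs, hst⟩, fun v hv => ?_⟩
  rcases lt_or_ge v s with hvs | hsv
  · exact ⟨s, ⟨hs, hst⟩, hvs.le⟩
  · exact ⟨v, ⟨h ⟨hsv, le_of_lt hv⟩, hv⟩, le_rfl⟩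

lemma exists_lt_icc_subset {T : Type*} [LinearOrder T] {I : Set T}
    (hI : IsInterval I) {t : T} (ht : t ∈ radSet I) :
    ∃ s, s < t ∧ s ∈ I ∧ Set.Icc s t ⊆ I := by
  obtain ⟨htI, ⟨w, hwI, hwt⟩, -⟩ := ht
  exact ⟨w, hwt, hwI, fun x hx => hI hx.1 hx.2 hwI htI⟩

lemma icc_subset_radSet {T : Type*} [LinearOrder T] {I : Set T} {s t : T}
    (hs : s ∈ radSet I) (h : Set.Icc s t ⊆ I) : Set.Icc s t ⊆ radSet I := by
  intro u hu
  rcases eq_or_lt_of_le hu.1 with rfl | hsu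
  · exact hs
  · exact mem_radSet_of_icc hsu hs.1 (fun x hx => h ⟨hx.1, hx.2.trans hu.2⟩)

lemma radSet_subset {T : Type*} [LinearOrder T] (I : Set T) : radSet I ⊆ I :=
  fun _ hx => hx.1

/-- The inclusion `C(rad I) ⟶ C(I)`. -/
noncomputable def radIncl (I : Set T) :
    intervalModule F T (radSet I) ⟶ intervalModule F T I where
  app t := ModuleCat.ofHom (Submodule.inclusion (by
    by_cases h : t ∈ radSet I
    · rw [if_pos h, if_pos h.1]
    · rw [if_neg h]; exact bot_le) :
      ↥(if t ∈ radSet I then (⊤ : Submodule F F) else (⊥ : Submodule F F)) →ₗ[F]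
        ↥(if t ∈ I then (⊤ : Submodule F F) else (⊥ : Submodule F F)))
  naturality s t f := by
    dsimp only [intervalModule]
    by_cases h : Set.Icc s t ⊆ radSet I
    · have h2 : Set.Icc s t ⊆ I := fun x hx => (h hx).1
      simp only [dif_pos h, dif_pos h2]
      apply ModuleCat.hom_ext; apply LinearMap.ext; intro x; rfl
    · simp only [dif_neg h]
      by_cases h2 : Set.Icc s t ⊆ I
      · simp only [dif_pos h2]
        have hs : s ∉ radSet I := fun hs => h (icc_subset_radSet hs h2)
        have hsub : Subsingleton ↥(if s ∈ radSet I then (⊤ : Submodule F F) else ⊥) := by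
          rw [if_neg hs]; infer_instance
        apply ModuleCat.hom_ext; apply LinearMap.ext; intro x
        rw [@Subsingleton.elim _ hsub x 0]
        simp
      · simp only [dif_neg h2, Limits.zero_comp, Limits.comp_zero]

/-- The elementary map `C(I)_s ⟶ C(rad I)_t` for `s < t`. -/
noncomputable def compMap (I : Set T) {s t : T} (hst : s < t) :
    ModuleCat.of F ↥(if s ∈ I then (⊤ : Submodule F F) else ⊥) ⟶
      ModuleCat.of F ↥(if t ∈ radSet I then (⊤ : Submodule F F) else ⊥) :=
  if h : Set.Icc s t ⊆ I then
    ModuleCat.ofHom (Submodule.inclusion (by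
      by_cases hs : s ∈ I
      · rw [if_pos hs, if_pos (mem_radSet_of_icc hst hs h)]
      · rw [if_neg hs]; exact bot_le) :
      ↥(if s ∈ I then (⊤ : Submodule F F) else (⊥ : Submodule F F)) →ₗ[F]
        ↥(if t ∈ radSet I then (⊤ : Submodule F F) else (⊥ : Submodule F F)))
  else 0

lemma map_comp_compMap (I : Set T) {u v t : T} (huv : u ≤ v) (hvt : v < t) :
    (intervalModule F T I).map (homOfLE huv) ≫ compMap F T I hvt =
      compMap F T I (lt_of_le_of_lt huv hvt) := by
  dsimp only [intervalModule]
  unfold compMap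
  by_cases h : Set.Icc u t ⊆ I
  · have h1 : Set.Icc u v ⊆ I := fun x hx => h ⟨hx.1, hx.2.trans hvt.le⟩
    have h2 : Set.Icc v t ⊆ I := fun x hx => h ⟨huv.trans hx.1, hx.2⟩
    simp only [dif_pos h, dif_pos h1, dif_pos h2]
    apply ModuleCat.hom_ext; apply LinearMap.ext; intro x; rfl
  · simp only [dif_neg h]
    by_cases h1 : Set.Icc u v ⊆ I
    · have h2 : ¬ Set.Icc v t ⊆ I := fun h2 => h (fun x hx => by
        rcases le_total x v with hxv | hvx
        · exact h1 ⟨hx.1, hxv⟩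
        · exact h2 ⟨hvx, hx.2⟩)
      simp only [dif_pos h1, dif_neg h2, Limits.comp_zero]
    · simp only [dif_neg h1, Limits.zero_comp]

lemma compMap_comp_map (I : Set T) {u t t' : T} (hut : u < t) (htt' : t ≤ t') :
    compMap F T I hut ≫ (intervalModule F T (radSet I)).map (homOfLE htt') =
      compMap F T I (lt_of_lt_of_le hut htt') := by
  dsimp only [intervalModule]
  unfold compMap
  by_cases h : Set.Icc u t' ⊆ I
  · have h1 : Set.Icc u t ⊆ I := fun x hx => h ⟨hx.1, hx.2.trans htt'⟩
    have hu : u ∈ I := h ⟨le_rfl, (hut.trans_le htt').le⟩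
    have ht : t ∈ radSet I := mem_radSet_of_icc hut hu h1
    have h2 : Set.Icc t t' ⊆ radSet I :=
      icc_subset_radSet ht (fun x hx => h ⟨hut.le.trans hx.1, hx.2⟩)
    simp only [dif_pos h, dif_pos h1, dif_pos h2]
    apply ModuleCat.hom_ext; apply LinearMap.ext; intro x; rfl
  · simp only [dif_neg h]
    by_cases h1 : Set.Icc u t ⊆ I
    · have h2 : ¬ Set.Icc t t' ⊆ radSet I := fun h2 => h (fun x hx => by
        rcases le_total x t with hxt | htx
        · exact h1 ⟨hx.1, hxt⟩
        · exact (h2 ⟨htx, hx.2⟩).1)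
      simp only [dif_pos h1, dif_neg h2, Limits.comp_zero]
    · simp only [dif_neg h1, Limits.zero_comp]

lemma compMap_comp_incl (I : Set T) {u t : T} (hut : u < t) :
    compMap F T I hut ≫ (radIncl F T I).app t =
      (intervalModule F T I).map (homOfLE hut.le) := by
  dsimp only [intervalModule, radIncl]
  unfold compMap
  by_cases h : Set.Icc u t ⊆ I
  · simp only [dif_pos h]
    apply ModuleCat.hom_ext; apply LinearMap.ext; intro x; rfl
  · simp only [dif_neg h, Limits.zero_comp]

/-- The projection `overline C(I) ⟶ C(rad I)`. -/
noncomputable def radProj (I : Set T) :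
    overlinePM F T (intervalModule F T I) ⟶ intervalModule F T (radSet I) where
  app t := colimit.desc (downFunctor T t ⋙ intervalModule F T I)
    { pt := (intervalModule F T (radSet I)).obj t
      ι :=
        { app := fun u => compMap F T I u.2
          naturality := fun u v g => by
            refine Eq.trans ?_ (Category.comp_id _).symm
            exact map_comp_compMap F T I (leOfHom g) v.2 } }
  naturality s t f := by
    apply colimit.hom_ext
    intro u
    simp only [overlinePM, colimit.ι_desc_assoc, colimit.ι_desc]
    exact (colimit.ι_desc _ _).trans (compMap_comp_map F T I u.2 (leOfHom f)).symm

lemma radProj_comp_radIncl (I : Set T) :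
    radProj F T I ≫ radIncl F T I = fromOverline F T (intervalModule F T I) := by
  ext t : 2
  apply colimit.hom_ext
  intro u
  simp only [NatTrans.comp_app, radProj, fromOverline, colimit.ι_desc_assoc, colimit.ι_desc]
  exact (colimit.ι_desc_assoc _ _ _).trans (compMap_comp_incl F T I u.2)

lemma radIncl_mono (I : Set T) : Mono (radIncl F T I) := by
  have : ∀ t : T, Mono ((radIncl F T I).app t) := by
    intro t
    rw [ModuleCat.mono_iff_injective]
    exact Submodule.inclusion_injective (by
      by_cases h : t ∈ radSet I
      · rw [if_pos h, if_pos h.1]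
      · rw [if_neg h]; exact bot_le)
  exact NatTrans.mono_of_mono_app _

lemma compMap_surjective (I : Set T) {s t : T} (hst : s < t) (hs : s ∈ I)
    (h : Set.Icc s t ⊆ I) : Function.Surjective (compMap F T I hst) := by
  unfold compMap
  rw [dif_pos h]
  intro y
  refine ⟨⟨y.1, ?_⟩, Subtype.ext rfl⟩
  rw [if_pos hs]
  trivial

lemma radProj_epi (I : Set T) (hI : IsInterval I) : Epi (radProj F T I) := by
  have : ∀ t : T, Epi ((radProj F T I).app t) := by
    intro t
    by_cases ht : t ∈ radSet I
    · obtain ⟨s, hst, hs, hsub⟩ := exists_lt_icc_subset hI ht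
      have hepi : Epi (compMap F T I hst) := by
        rw [ModuleCat.epi_iff_surjective]
        exact compMap_surjective F T I hst hs hsub
      have h2 : colimit.ι (downFunctor T t ⋙ intervalModule F T I) ⟨s, hst⟩ ≫
          (radProj F T I).app t = compMap F T I hst := colimit.ι_desc _ _
      haveI : Epi (colimit.ι (downFunctor T t ⋙ intervalModule F T I) ⟨s, hst⟩ ≫
          (radProj F T I).app t) := by rw [h2]; exact hepi
      exact epi_of_epi (colimit.ι (downFunctor T t ⋙ intervalModule F T I) ⟨s, hst⟩) _
    · rw [ModuleCat.epi_iff_surjective]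
      haveI hsub : Subsingleton ↑((intervalModule F T (radSet I)).obj t) := by
        dsimp only [intervalModule]
        rw [if_neg ht]
        infer_instance
      intro y
      exact ⟨0, Subsingleton.elim _ _⟩
  exact NatTrans.epi_of_epi_app _

/-- `rad(C(I))` is isomorphic to `C(rad I)` (as persistence modules). -/
theorem rad_intervalModule_iso (I : Set T) (hI : IsInterval I) :
    Nonempty (radPM F T (intervalModule F T I) ≅ intervalModule F T (radSet I)) := by
  haveI : Epi (radProj F T I) := radProj_epi F T I hI
  haveI : StrongEpi (radProj F T I) := strongEpi_of_epi _
  haveI : Mono (radIncl F T I) := radIncl_mono F T I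
  exact ⟨(image.isoStrongEpiMono (radProj F T I) (radIncl F T I)
    (radProj_comp_radIncl F T I)).symm⟩
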